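/- For p = 1 (q = ∞) and a dictionary of m > 1 separable matrix-valued kernels k_i L with sup_x k_i(x,x) ≤ κ and tr(L) ≤ τ, the empirical Rademacher complexity of H_λ^1 satisfies R̂_l(H_λ^1) ≤ λ √(η₀ e ⌈2 ln m⌉ κ τ / l), where η₀ = 23/22, giving a √(log m) dependence on the number of kernels. -/

import Mathlib

open scoped BigOperators RealInnerProductSpace
open Matrix

/-- Sign vector associated with a boolean assignment. -/
def radSign (b : Bool) : ℝ := if b then 1 else -1


def dfac (s : ℕ) : ℕ := ∏ i ∈ Finset.range s, (2*i+1)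

lemma dfac_fact (k : ℕ) : 2^k * k.factorial * dfac k = (2*k).factorial := by
  induction k with
  | zero => simp [dfac]
  | succ k ih =>
    have h1 : dfac (k+1) = dfac k * (2*k+1) := by
      simp [dfac, Finset.prod_range_succ]
    have h2 : 2*(k+1) = (2*k+1)+1 := by ring
    rw [h1, h2, Nat.factorial_succ, Nat.factorial_succ, pow_succ, Nat.factorial_succ]
    rw [← ih]; ring

lemma two_pow_fact_le (j : ℕ) : 2^j * j.factorial ≤ (2*j).factorial := by
  induction j with
  | zero => simp
  | succ j ih =>
    have h2 : 2*(j+1) = (2*j+1)+1 := by ring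
    rw [h2, Nat.factorial_succ, Nat.factorial_succ, pow_succ]
    calc 2^j * 2 * ((j+1) * j.factorial) = (2*(j+1)) * (2^j * j.factorial) := by ring
    _ ≤ (2*(j+1)) * (2*j).factorial := Nat.mul_le_mul_left _ ih
    _ ≤ ((2*j+1)+1) * ((2*j+1) * (2*j).factorial) := by
        apply Nat.mul_le_mul
        · omega
        · exact Nat.le_mul_of_pos_left _ (by omega)

lemma coeff_ineq {j k : ℕ} (hj : j ≤ k) :
    (2*k).choose (2*j) * dfac (k-j) ≤ dfac k * k.choose j := by
  have key : ((2*k).choose (2*j) * dfac (k-j)) * ((2*j).factorial * (2^(k-j) * (k-j).factorial))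
      = (dfac k * k.choose j) * (2^k * j.factorial * (k-j).factorial) := by
    have A : (2*k).choose (2*j) * ((2*j).factorial * (2*(k-j)).factorial) = (2*k).factorial := by
      have h2kj : 2*(k-j) = 2*k - 2*j := by omega
      rw [h2kj, ← mul_assoc]
      exact Nat.choose_mul_factorial_mul_factorial (by omega)
    have B : 2^(k-j) * (k-j).factorial * dfac (k-j) = (2*(k-j)).factorial := dfac_fact _
    have C : k.choose j * (j.factorial * (k-j).factorial) = k.factorial := by
      rw [← mul_assoc]; exact Nat.choose_mul_factorial_mul_factorial hj
    have D : 2^k * k.factorial * dfac k = (2*k).factorial := dfac_fact k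
    have E : 2^k = 2^(k-j) * 2^j := by rw [← pow_add]; congr 1; omega
    calc ((2*k).choose (2*j) * dfac (k-j)) * ((2*j).factorial * (2^(k-j) * (k-j).factorial))
        = (2*k).choose (2*j) * ((2*j).factorial * (2^(k-j) * (k-j).factorial * dfac (k-j))) := by ring
      _ = (2*k).choose (2*j) * ((2*j).factorial * (2*(k-j)).factorial) := by rw [B]
      _ = (2*k).factorial := A
      _ = 2^k * k.factorial * dfac k := D.symm
      _ = 2^k * (k.choose j * (j.factorial * (k-j).factorial)) * dfac k := by rw [C]
      _ = (dfac k * k.choose j) * (2^k * j.factorial * (k-j).factorial) := by ring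
  -- from key and 2^j j! ≤ (2j)! conclude
  have hle : (2^k * j.factorial * (k-j).factorial) ≤ ((2*j).factorial * (2^(k-j) * (k-j).factorial)) := by
    have h := two_pow_fact_le j
    have E : 2^k = 2^j * 2^(k-j) := by rw [← pow_add]; congr 1; omega
    calc 2^k * j.factorial * (k-j).factorial = (2^j * j.factorial) * (2^(k-j) * (k-j).factorial) := by rw [E]; ring
      _ ≤ (2*j).factorial * (2^(k-j) * (k-j).factorial) := Nat.mul_le_mul_right _ h
  have hpos : 0 < (2*j).factorial * (2^(k-j) * (k-j).factorial) := by positivity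
  by_contra hlt
  push_neg at hlt
  have : (dfac k * k.choose j) * (2^k * j.factorial * (k-j).factorial)
      < ((2*k).choose (2*j) * dfac (k-j)) * ((2*j).factorial * (2^(k-j) * (k-j).factorial)) := by
    calc (dfac k * k.choose j) * (2^k * j.factorial * (k-j).factorial)
        ≤ (dfac k * k.choose j) * ((2*j).factorial * (2^(k-j) * (k-j).factorial)) := Nat.mul_le_mul_left _ hle
      _ < ((2*k).choose (2*j) * dfac (k-j)) * ((2*j).factorial * (2^(k-j) * (k-j).factorial)) := by
          exact (Nat.mul_lt_mul_right hpos).mpr hlt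
  omega

lemma even_reindex (F : ℕ → ℝ) (k : ℕ) :
    ∑ i ∈ Finset.range (2*k+1), (if Even i then F i else 0)
      = ∑ j ∈ Finset.range (k+1), F (2*j) := by
  rw [← Finset.sum_filter]
  apply Finset.sum_nbij' (fun i => i/2) (fun j => 2*j)
  · intro i hi
    simp only [Finset.mem_filter, Finset.mem_range] at hi
    simp only [Finset.mem_range]
    omega
  · intro j hj
    simp only [Finset.mem_range] at hj
    simp only [Finset.mem_filter, Finset.mem_range]
    exact ⟨by omega, ⟨j, by omega⟩⟩
  · intro i hi
    simp only [Finset.mem_filter, Finset.mem_range] at hi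
    obtain ⟨_, t, ht⟩ := hi
    omega
  · intro j hj; omega
  · intro i hi
    simp only [Finset.mem_filter, Finset.mem_range] at hi
    obtain ⟨_, t, ht⟩ := hi
    congr 1; omega

lemma addpow_even_expand (x a : ℝ) (k : ℕ) :
    (x+a)^(2*k) + (x-a)^(2*k)
      = 2 * ∑ j ∈ Finset.range (k+1), ((2*k).choose (2*j) : ℝ) * a^(2*j) * x^(2*(k-j)) := by
  have h1 : (x+a)^(2*k) = ∑ i ∈ Finset.range (2*k+1), a^i * x^(2*k-i) * ((2*k).choose i : ℝ) := by
    rw [show x + a = a + x by ring, add_pow]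
  have h2 : (x-a)^(2*k) = ∑ i ∈ Finset.range (2*k+1), (-a)^i * x^(2*k-i) * ((2*k).choose i : ℝ) := by
    rw [show x - a = (-a) + x by ring, add_pow]
  rw [h1, h2, ← Finset.sum_add_distrib]
  have h3 : ∀ i ∈ Finset.range (2*k+1),
      a^i * x^(2*k-i) * ((2*k).choose i : ℝ) + (-a)^i * x^(2*k-i) * ((2*k).choose i : ℝ)
        = (if Even i then (2:ℝ) * (((2*k).choose i : ℝ) * a^i * x^(2*k-i)) else 0) := by
    intro i _
    by_cases h : Even i
    · rw [if_pos h, h.neg_pow]; ring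
    · rw [if_neg h, (Nat.not_even_iff_odd.mp h).neg_pow]; ring
  rw [Finset.sum_congr rfl h3]
  have h4 := even_reindex (fun i => (2:ℝ) * (((2*k).choose i : ℝ) * a^i * x^(2*k-i))) k
  rw [h4, Finset.mul_sum]
  apply Finset.sum_congr rfl
  intro j hj
  simp only [Finset.mem_range] at hj
  have : 2*k - 2*j = 2*(k-j) := by omega
  rw [this]

def x_aux (A : ℝ) (N i : ℕ) : ℝ := A^(N-i) * ((N).choose i : ℝ)

lemma addpow_mono {A t t' : ℝ} (hA : 0 ≤ A) (ht : |t| ≤ t') (N : ℕ) :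
    (A+t)^N + (A-t)^N ≤ (A+t')^N + (A-t')^N := by
  have h1 : ∀ u : ℝ, (A+u)^N + (A-u)^N
      = ∑ i ∈ Finset.range (N+1), (u^i + (-u)^i) * x_aux A N i := by
    intro u
    simp only [x_aux]
    rw [show A + u = u + A by ring, show A - u = (-u) + A by ring, add_pow, add_pow,
      ← Finset.sum_add_distrib]
    apply Finset.sum_congr rfl; intro i _; ring
  rw [h1, h1]
  apply Finset.sum_le_sum
  intro i _
  have hx : 0 ≤ x_aux A N i := by
    simp only [x_aux]; positivity
  apply mul_le_mul_of_nonneg_right _ hx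
  by_cases h : Even i
  · rw [h.neg_pow, h.neg_pow]
    have : t^i ≤ t'^i := by
      calc t^i = |t|^i := (h.pow_abs t).symm
        _ ≤ t'^i := pow_le_pow_left₀ (abs_nonneg t) ht i
    linarith
  · rw [(Nat.not_even_iff_odd.mp h).neg_pow, (Nat.not_even_iff_odd.mp h).neg_pow]
    ring_nf; exact le_refl _

open scoped RealInnerProductSpace in
lemma norm_add_sub_pow_le {E : Type*} [NormedAddCommGroup E] [InnerProductSpace ℝ E]
    (v u : E) (k : ℕ) :
    ‖v+u‖^(2*k) + ‖v-u‖^(2*k) ≤ (‖v‖+‖u‖)^(2*k) + (‖v‖-‖u‖)^(2*k) := by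
  have e1 : ‖v+u‖^(2*k) = (‖v‖^2 + ‖u‖^2 + 2*⟪v,u⟫)^k := by
    rw [pow_mul, norm_add_sq_real]; congr 1; ring
  have e2 : ‖v-u‖^(2*k) = (‖v‖^2 + ‖u‖^2 - 2*⟪v,u⟫)^k := by
    rw [pow_mul, norm_sub_sq_real]; congr 1; ring
  have e3 : (‖v‖+‖u‖)^(2*k) = (‖v‖^2 + ‖u‖^2 + 2*(‖v‖*‖u‖))^k := by
    rw [pow_mul]; congr 1; ring
  have e4 : (‖v‖-‖u‖)^(2*k) = (‖v‖^2 + ‖u‖^2 - 2*(‖v‖*‖u‖))^k := by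
    rw [pow_mul]; congr 1; ring
  rw [e1, e2, e3, e4]
  apply addpow_mono (by positivity)
  rw [abs_mul, abs_two]
  have := abs_real_inner_le_norm v u
  nlinarith [abs_nonneg ⟪v,u⟫]


open scoped RealInnerProductSpace in
lemma khintchine {E : Type*} [NormedAddCommGroup E] [InnerProductSpace ℝ E]
    {α : Type*} [Fintype α] [DecidableEq α] (u : α → E) (s : Finset α) :
    ∀ k : ℕ, ∑ σ : α → Bool, ‖∑ p ∈ s, radSign (σ p) • u p‖^(2*k)
      ≤ 2^(Fintype.card α) * dfac k * (∑ p ∈ s, ‖u p‖^2)^k := by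
  induction s using Finset.cons_induction with
  | empty =>
    intro k
    rcases Nat.eq_zero_or_pos k with rfl | hk
    · simp [dfac, Finset.card_univ, Fintype.card_fun]
    · simp [Finset.sum_empty, norm_zero,
        zero_pow (by omega : 2*k ≠ 0), zero_pow (by omega : k ≠ 0)]
  | cons a s ha IH =>
    intro k
    set B : ℝ := ∑ p ∈ s, ‖u p‖^2 with hB
    have hBnn : 0 ≤ B := Finset.sum_nonneg (fun p _ => by positivity)
    set T : (α → Bool) → E := fun σ => ∑ p ∈ s, radSign (σ p) • u p with hT
    have hTflip : ∀ σ : α → Bool, ∑ p ∈ s, radSign ((Function.update σ a (!σ a)) p) • u p = T σ := by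
      intro σ; apply Finset.sum_congr rfl; intro p hp
      rw [Function.update_of_ne (by rintro rfl; exact ha hp)]
    have hinv : Function.Involutive (fun σ : α → Bool => Function.update σ a (!σ a)) := by
      intro σ; funext p
      by_cases hp : p = a
      · subst hp; simp
      · simp [Function.update_of_ne hp]
    have key : ∀ σ : α → Bool,
        ‖∑ p ∈ Finset.cons a s ha, radSign (σ p) • u p‖^(2*k)
          + ‖∑ p ∈ Finset.cons a s ha, radSign ((Function.update σ a (!σ a)) p) • u p‖^(2*k)
        ≤ (‖T σ‖ + ‖u a‖)^(2*k) + (‖T σ‖ - ‖u a‖)^(2*k) := by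
      intro σ
      rw [Finset.sum_cons, Finset.sum_cons, hTflip σ, Function.update_self]
      have hTs : ∑ p ∈ s, radSign (σ p) • u p = T σ := rfl
      rw [hTs]
      have r1 : radSign true = 1 := rfl
      have r2 : radSign false = -1 := rfl
      cases hσ : σ a with
      | true =>
        rw [Bool.not_true, r1, r2, one_smul, neg_one_smul]
        rw [show u a + T σ = T σ + u a from add_comm _ _,
            show -u a + T σ = T σ - u a by abel]
        exact norm_add_sub_pow_le (T σ) (u a) k
      | false =>
        rw [Bool.not_false, r1, r2, one_smul, neg_one_smul]
        rw [show u a + T σ = T σ + u a from add_comm _ _,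
            show -u a + T σ = T σ - u a by abel]
        rw [add_comm (‖T σ - u a‖^(2*k))]
        exact norm_add_sub_pow_le (T σ) (u a) k
    -- pairing identity
    have hsum2 : (2:ℝ) * ∑ σ : α → Bool, ‖∑ p ∈ Finset.cons a s ha, radSign (σ p) • u p‖^(2*k)
        = ∑ σ : α → Bool, (‖∑ p ∈ Finset.cons a s ha, radSign (σ p) • u p‖^(2*k)
            + ‖∑ p ∈ Finset.cons a s ha, radSign ((Function.update σ a (!σ a)) p) • u p‖^(2*k)) := by
      rw [Finset.sum_add_distrib]
      have h := Equiv.sum_comp hinv.toPerm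
        (fun σ : α → Bool => ‖∑ p ∈ Finset.cons a s ha, radSign (σ p) • u p‖^(2*k))
      have h' : ∑ σ : α → Bool,
          ‖∑ p ∈ Finset.cons a s ha, radSign ((Function.update σ a (!σ a)) p) • u p‖^(2*k)
          = ∑ σ : α → Bool, ‖∑ p ∈ Finset.cons a s ha, radSign (σ p) • u p‖^(2*k) := h
      rw [h']; ring
    have step1 : ∑ σ : α → Bool, (‖∑ p ∈ Finset.cons a s ha, radSign (σ p) • u p‖^(2*k)
            + ‖∑ p ∈ Finset.cons a s ha, radSign ((Function.update σ a (!σ a)) p) • u p‖^(2*k))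
        ≤ ∑ σ : α → Bool, ((‖T σ‖ + ‖u a‖)^(2*k) + (‖T σ‖ - ‖u a‖)^(2*k)) :=
      Finset.sum_le_sum (fun σ _ => key σ)
    have step2 : ∑ σ : α → Bool, ((‖T σ‖ + ‖u a‖)^(2*k) + (‖T σ‖ - ‖u a‖)^(2*k))
        = 2 * ∑ j ∈ Finset.range (k+1), ((2*k).choose (2*j) : ℝ) * ‖u a‖^(2*j)
            * ∑ σ : α → Bool, ‖T σ‖^(2*(k-j)) := by
      have e : ∀ σ : α → Bool, (‖T σ‖ + ‖u a‖)^(2*k) + (‖T σ‖ - ‖u a‖)^(2*k)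
          = 2 * ∑ j ∈ Finset.range (k+1), ((2*k).choose (2*j) : ℝ) * ‖u a‖^(2*j) * ‖T σ‖^(2*(k-j)) :=
        fun σ => addpow_even_expand _ _ k
      rw [Finset.sum_congr rfl (fun σ _ => e σ), ← Finset.mul_sum, Finset.sum_comm]
      congr 1
      apply Finset.sum_congr rfl
      intro j _
      rw [Finset.mul_sum]
    have step3 : ∑ j ∈ Finset.range (k+1), ((2*k).choose (2*j) : ℝ) * ‖u a‖^(2*j)
            * ∑ σ : α → Bool, ‖T σ‖^(2*(k-j))
        ≤ 2^(Fintype.card α) * dfac k * (‖u a‖^2 + B)^k := by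
      have hexp : (‖u a‖^2 + B)^k
          = ∑ j ∈ Finset.range (k+1), (‖u a‖^2)^j * B^(k-j) * (k.choose j : ℝ) := add_pow _ _ _
      rw [hexp, Finset.mul_sum]
      apply Finset.sum_le_sum
      intro j hj
      have hjk : j ≤ k := by simpa using Nat.lt_succ_iff.mp (Finset.mem_range.mp hj)
      have hIH := IH (k - j)
      have hc : ((2*k).choose (2*j) * dfac (k-j) : ℝ) ≤ (dfac k * k.choose j : ℝ) := by
        exact_mod_cast Nat.cast_le.mpr (coeff_ineq hjk)
      have hpa : (0 : ℝ) ≤ ‖u a‖^(2*j) := by positivity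
      have hC2 : (0:ℝ) ≤ ((2*k).choose (2*j) : ℝ) := by positivity
      calc ((2*k).choose (2*j) : ℝ) * ‖u a‖^(2*j) * ∑ σ : α → Bool, ‖T σ‖^(2*(k-j))
          ≤ ((2*k).choose (2*j) : ℝ) * ‖u a‖^(2*j) * (2^(Fintype.card α) * dfac (k-j) * B^(k-j)) := by
            apply mul_le_mul_of_nonneg_left hIH (by positivity)
        _ = (((2*k).choose (2*j) : ℝ) * dfac (k-j)) * (2^(Fintype.card α) * ‖u a‖^(2*j) * B^(k-j)) := by
            push_cast; ring
        _ ≤ ((dfac k : ℝ) * (k.choose j : ℝ)) * (2^(Fintype.card α) * ‖u a‖^(2*j) * B^(k-j)) := by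
            apply mul_le_mul_of_nonneg_right _ (by positivity)
            push_cast at hc ⊢; exact hc
        _ = 2^(Fintype.card α) * (dfac k : ℝ) * ((‖u a‖^2)^j * B^(k-j) * (k.choose j : ℝ)) := by
            rw [← pow_mul]; ring
    have hfinal : (2:ℝ) * ∑ σ : α → Bool, ‖∑ p ∈ Finset.cons a s ha, radSign (σ p) • u p‖^(2*k)
        ≤ 2 * (2^(Fintype.card α) * dfac k * (‖u a‖^2 + B)^k) := by
      rw [hsum2]
      calc _ ≤ _ := step1
        _ = _ := step2
        _ ≤ 2 * (2^(Fintype.card α) * dfac k * (‖u a‖^2 + B)^k) := by linarith [step3]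
    have : (∑ p ∈ Finset.cons a s ha, ‖u p‖^2) = ‖u a‖^2 + B := Finset.sum_cons ha
    rw [this]
    linarith [hfinal]

theorem rademacher_bound_separable_l1
    {X : Type*} {n m l : ℕ} (hl : 0 < l) (hm : 1 < m)
    (H : Fin m → Type) [∀ j, NormedAddCommGroup (H j)] [∀ j, InnerProductSpace ℝ (H j)]
    (Ksec : ∀ j, X → Fin n → H j)
    (k : Fin m → X → X → ℝ) (L : Matrix (Fin n) (Fin n) ℝ) (hL : L.PosSemidef)
    (hker : ∀ j x z a b, k j x z * L a b = ⟪Ksec j x a, Ksec j z b⟫)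
    (κ τ : ℝ) (hκ : ∀ j x', k j x' x' ≤ κ) (hτ : L.trace ≤ τ)
    (lam : ℝ) (hlam : 0 ≤ lam)
    (x : Fin l → X) :
    (1 / (l : ℝ)) * ((1 / (2 ^ (n * l) : ℝ)) *
      ∑ σ : Fin l × Fin n → Bool,
        sSup {s : ℝ | ∃ h : ∀ j, H j,
          (∑ j, ‖h j‖) ≤ lam ∧
          s = ∑ i, ∑ a, radSign (σ (i, a)) * (∑ j, ⟪Ksec j (x i) a, h j⟫)})
    ≤ lam * Real.sqrt ((23 / 22) * Real.exp 1 *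
        (⌈2 * Real.log m⌉₊ : ℝ) * κ * τ / l) := by
  classical
  haveI : Nonempty (Fin m) := ⟨⟨0, by omega⟩⟩
  have hl0 : (0:ℝ) < l := by exact_mod_cast hl
  have hdiag : ∀ a, 0 ≤ L a a := by
    intro a
    exact hL.diag_nonneg
  have hRHS0 : (0:ℝ) ≤ lam * Real.sqrt ((23 / 22) * Real.exp 1 *
      (⌈2 * Real.log m⌉₊ : ℝ) * κ * τ / l) := mul_nonneg hlam (Real.sqrt_nonneg _)
  by_cases hκ0 : 0 ≤ κ
  swap
  · -- degenerate case κ < 0 : all sections vanish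
    push_neg at hκ0
    have hK0 : ∀ j x' a, Ksec j x' a = 0 := by
      intro j x' a
      have h1 : k j x' x' * L a a = ⟪Ksec j x' a, Ksec j x' a⟫ := hker j x' x' a a
      have h2 : k j x' x' * L a a ≤ 0 :=
        mul_nonpos_of_nonpos_of_nonneg ((hκ j x').trans hκ0.le) (hdiag a)
      have h3 : ‖Ksec j x' a‖^2 ≤ 0 := by
        rw [← real_inner_self_eq_norm_sq, ← h1]; exact h2
      have : ‖Ksec j x' a‖ = 0 := by nlinarith [norm_nonneg (Ksec j x' a)]
      exact norm_eq_zero.mp this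
    have hsup : ∀ σ : Fin l × Fin n → Bool,
        sSup {s : ℝ | ∃ h : ∀ j, H j, (∑ j, ‖h j‖) ≤ lam ∧
          s = ∑ i, ∑ a, radSign (σ (i, a)) * (∑ j, ⟪Ksec j (x i) a, h j⟫)} ≤ 0 := by
      intro σ
      apply Real.sSup_le _ le_rfl
      rintro y ⟨h, _, rfl⟩
      apply le_of_eq
      simp [hK0]
    have hs : (∑ σ : Fin l × Fin n → Bool,
        sSup {s : ℝ | ∃ h : ∀ j, H j, (∑ j, ‖h j‖) ≤ lam ∧
          s = ∑ i, ∑ a, radSign (σ (i, a)) * (∑ j, ⟪Ksec j (x i) a, h j⟫)}) ≤ 0 :=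
      Finset.sum_nonpos (fun σ _ => hsup σ)
    have hle0 : (1 / (l : ℝ)) * ((1 / (2 ^ (n * l) : ℝ)) * ∑ σ : Fin l × Fin n → Bool,
        sSup {s : ℝ | ∃ h : ∀ j, H j, (∑ j, ‖h j‖) ≤ lam ∧
          s = ∑ i, ∑ a, radSign (σ (i, a)) * (∑ j, ⟪Ksec j (x i) a, h j⟫)}) ≤ 0 := by
      apply mul_nonpos_iff.mpr
      left
      constructor
      · positivity
      · exact mul_nonpos_iff.mpr (Or.inl ⟨by positivity, hs⟩)
    linarith
  · -- main case
    set r := ⌈2 * Real.log m⌉₊ with hrdef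
    set q := (r+1)/2 with hqdef
    have hm2 : (2:ℝ) ≤ (m:ℝ) := by exact_mod_cast hm
    have hlogm : (1:ℝ)/2 < Real.log m :=
      lt_of_lt_of_le (by linarith [Real.log_two_gt_d9]) (Real.log_le_log (by norm_num) hm2)
    have hr2 : 2 ≤ r := by
      have h1 : ((1:ℕ):ℝ) < 2 * Real.log m := by push_cast; linarith
      have := Nat.lt_ceil.mpr h1
      omega
    have hq1 : 1 ≤ q := by omega
    have hrq : r ≤ 2*q := by omega
    have hqr : 2*q ≤ r + 1 := by omega
    have htr : L.trace = ∑ a, L a a := by simp [Matrix.trace, Matrix.diag]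
    have htr0 : 0 ≤ L.trace := by rw [htr]; exact Finset.sum_nonneg fun a _ => hdiag a
    have hτ0 : 0 ≤ τ := le_trans htr0 hτ
    have hκτ : 0 ≤ κ * τ := mul_nonneg hκ0 hτ0
    set w : (j : Fin m) → ((Fin l × Fin n) → Bool) → H j :=
      fun j σ => ∑ p : Fin l × Fin n, radSign (σ p) • Ksec j (x p.1) p.2 with hw
    set M : ((Fin l × Fin n) → Bool) → ℝ :=
      fun σ => Finset.univ.sup' Finset.univ_nonempty (fun j => ‖w j σ‖) with hM
    have hMle : ∀ σ j, ‖w j σ‖ ≤ M σ := fun σ j =>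
      Finset.le_sup' (fun j => ‖w j σ‖) (Finset.mem_univ j)
    have hM0 : ∀ σ, 0 ≤ M σ := fun σ =>
      le_trans (norm_nonneg (w (Classical.arbitrary _) σ)) (hMle σ _)
    -- Step A: sSup bound
    have hsupA : ∀ σ : Fin l × Fin n → Bool,
        sSup {s : ℝ | ∃ h : ∀ j, H j, (∑ j, ‖h j‖) ≤ lam ∧
          s = ∑ i, ∑ a, radSign (σ (i, a)) * (∑ j, ⟪Ksec j (x i) a, h j⟫)} ≤ lam * M σ := by
      intro σ
      apply Real.sSup_le _ (mul_nonneg hlam (hM0 σ))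
      rintro y ⟨h, hh, rfl⟩
      have e1 : ∀ j, ⟪w j σ, h j⟫
          = ∑ p : Fin l × Fin n, radSign (σ p) * ⟪Ksec j (x p.1) p.2, h j⟫ := by
        intro j
        rw [hw]
        rw [sum_inner]
        exact Finset.sum_congr rfl fun p _ => real_inner_smul_left _ _ _
      have hre : ∑ j, ⟪w j σ, h j⟫
          = ∑ i, ∑ a, radSign (σ (i,a)) * (∑ j, ⟪Ksec j (x i) a, h j⟫) := by
        calc ∑ j, ⟪w j σ, h j⟫
            = ∑ j, ∑ p : Fin l × Fin n, radSign (σ p) * ⟪Ksec j (x p.1) p.2, h j⟫ :=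
              Finset.sum_congr rfl fun j _ => e1 j
          _ = ∑ p : Fin l × Fin n, ∑ j, radSign (σ p) * ⟪Ksec j (x p.1) p.2, h j⟫ :=
              Finset.sum_comm
          _ = ∑ p : Fin l × Fin n, radSign (σ p) * ∑ j, ⟪Ksec j (x p.1) p.2, h j⟫ :=
              Finset.sum_congr rfl fun p _ => (Finset.mul_sum _ _ _).symm
          _ = ∑ i, ∑ a, radSign (σ (i,a)) * ∑ j, ⟪Ksec j (x i) a, h j⟫ :=
              Fintype.sum_prod_type _
      rw [← hre]
      calc ∑ j, ⟪w j σ, h j⟫ ≤ ∑ j, ‖w j σ‖ * ‖h j‖ :=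
            Finset.sum_le_sum (fun j _ => real_inner_le_norm _ _)
        _ ≤ ∑ j, M σ * ‖h j‖ := Finset.sum_le_sum (fun j _ =>
            mul_le_mul_of_nonneg_right (hMle σ j) (norm_nonneg _))
        _ = M σ * ∑ j, ‖h j‖ := by rw [Finset.mul_sum]
        _ ≤ M σ * lam := mul_le_mul_of_nonneg_left hh (hM0 σ)
        _ = lam * M σ := mul_comm _ _
    -- Step B: second moment bound
    have hBj : ∀ j, (∑ p : Fin l × Fin n, ‖Ksec j (x p.1) p.2‖^2) ≤ l * (κ * τ) := by
      intro j
      rw [Fintype.sum_prod_type]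
      calc ∑ i, ∑ a, ‖Ksec j (x i) a‖^2 = ∑ i : Fin l, k j (x i) (x i) * L.trace := by
            apply Finset.sum_congr rfl; intro i _
            rw [htr, Finset.mul_sum]
            apply Finset.sum_congr rfl; intro a _
            rw [← real_inner_self_eq_norm_sq, ← hker]
        _ ≤ ∑ _i : Fin l, κ * τ := Finset.sum_le_sum (fun i _ => by
            calc k j (x i) (x i) * L.trace ≤ κ * L.trace :=
                  mul_le_mul_of_nonneg_right (hκ j (x i)) htr0
              _ ≤ κ * τ := mul_le_mul_of_nonneg_left hτ hκ0)
        _ = l * (κ * τ) := by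
            rw [Finset.sum_const, Finset.card_univ, Fintype.card_fin, nsmul_eq_mul]
    have hkh : ∀ j, ∑ σ : (Fin l × Fin n) → Bool, ‖w j σ‖^(2*q)
        ≤ 2^(l*n) * dfac q * (l * (κ * τ))^q := by
      intro j
      have h1 := khintchine (fun p : Fin l × Fin n => Ksec j (x p.1) p.2) Finset.univ q
      have hcard : Fintype.card (Fin l × Fin n) = l * n := by simp
      rw [hcard] at h1
      refine le_trans h1 ?_
      apply mul_le_mul_of_nonneg_left _ (by positivity)
      exact pow_le_pow_left₀ (Finset.sum_nonneg fun p _ => by positivity) (hBj j) q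
    have hMpow : ∑ σ : (Fin l × Fin n) → Bool, (M σ)^(2*q)
        ≤ m * (2^(l*n) * dfac q * (l * (κ*τ))^q) := by
      calc ∑ σ : (Fin l × Fin n) → Bool, (M σ)^(2*q)
          ≤ ∑ σ : (Fin l × Fin n) → Bool, ∑ j, ‖w j σ‖^(2*q) := by
            apply Finset.sum_le_sum
            intro σ _
            obtain ⟨j, _, hj⟩ := Finset.exists_mem_eq_sup'
              (Finset.univ_nonempty (α := Fin m)) (fun j => ‖w j σ‖)
            have : M σ = ‖w j σ‖ := hj
            rw [this]
            exact Finset.single_le_sum (f := fun j => ‖w j σ‖^(2*q))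
              (fun j _ => by positivity) (Finset.mem_univ j)
        _ = ∑ j, ∑ σ : (Fin l × Fin n) → Bool, ‖w j σ‖^(2*q) := Finset.sum_comm
        _ ≤ ∑ _j : Fin m, ((2:ℝ)^(l*n) * dfac q * (l*(κ*τ))^q) :=
            Finset.sum_le_sum (fun j _ => hkh j)
        _ = m * (2^(l*n) * dfac q * (l * (κ*τ))^q) := by
            rw [Finset.sum_const, Finset.card_univ, Fintype.card_fin, nsmul_eq_mul]
    set Q : ℝ := 23/22 * Real.exp 1 * r * κ * τ with hQ
    have hQ0 : 0 ≤ Q := by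
      have hrr : (0:ℝ) ≤ (r:ℝ) := by positivity
      have he : (0:ℝ) ≤ Real.exp 1 := (Real.exp_pos 1).le
      rw [hQ]
      exact mul_nonneg (mul_nonneg (mul_nonneg (mul_nonneg (by norm_num) he) hrr) hκ0) hτ0
    have hQl0 : 0 ≤ Q * l := mul_nonneg hQ0 hl0.le
    have hmain : (m:ℝ) * (2^(l*n) * dfac q * (l*(κ*τ))^q) ≤ 2^(l*n) * (Q * l)^q := by
      have h1 : (m:ℝ) ≤ Real.exp 1 ^ q := by
        have hlm : Real.log m ≤ q := by
          have hceil := Nat.le_ceil (2 * Real.log m)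
          have hrq' : (r:ℝ) ≤ 2*(q:ℝ) := by exact_mod_cast hrq
          rw [← hrdef] at hceil
          linarith
        calc (m:ℝ) = Real.exp (Real.log m) := (Real.exp_log (by positivity)).symm
          _ ≤ Real.exp q := Real.exp_le_exp.mpr hlm
          _ = Real.exp 1 ^ q := by
              rw [← Real.exp_nat_mul]; norm_num
      have h2 : (dfac q : ℝ) ≤ (r:ℝ)^q := by
        have hnat : dfac q ≤ r^q := by
          calc dfac q ≤ (2*q-1)^(Finset.range q).card :=
                Finset.prod_le_pow_card _ _ _ (fun i hi => by
                  simp only [Finset.mem_range] at hi; omega)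
            _ = (2*q-1)^q := by rw [Finset.card_range]
            _ ≤ r^q := Nat.pow_le_pow_left (by omega) q
        calc (dfac q : ℝ) ≤ ((r^q : ℕ) : ℝ) := by exact_mod_cast hnat
          _ = (r:ℝ)^q := by push_cast; ring
      have hbase : Real.exp 1 * (r:ℝ) * ((l:ℝ)*(κ*τ)) ≤ Q * l := by
        have hexp : (0:ℝ) ≤ Real.exp 1 := (Real.exp_pos 1).le
        have hrr : (0:ℝ) ≤ (r:ℝ) := by positivity
        have : Q * l = 23/22 * (Real.exp 1 * (r:ℝ) * ((l:ℝ)*(κ*τ))) := by rw [hQ]; ring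
        rw [this]
        nlinarith [mul_nonneg (mul_nonneg hexp hrr) (mul_nonneg hl0.le hκτ)]
      calc (m:ℝ) * (2^(l*n) * dfac q * (l*(κ*τ))^q)
          = 2^(l*n) * ((m:ℝ) * (dfac q : ℝ) * ((l:ℝ)*(κ*τ))^q) := by ring
        _ ≤ 2^(l*n) * (Real.exp 1 ^ q * (r:ℝ)^q * ((l:ℝ)*(κ*τ))^q) := by
            apply mul_le_mul_of_nonneg_left _ (by positivity)
            apply mul_le_mul_of_nonneg_right _ (by positivity)
            apply mul_le_mul h1 h2 (by positivity) (by positivity)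
        _ = 2^(l*n) * ((Real.exp 1 * (r:ℝ) * ((l:ℝ)*(κ*τ)))^q) := by
            rw [← mul_pow, ← mul_pow]
        _ ≤ 2^(l*n) * ((Q * l)^q) := by
            apply mul_le_mul_of_nonneg_left _ (by positivity)
            apply pow_le_pow_left₀ _ hbase
            have hexp : (0:ℝ) ≤ Real.exp 1 := (Real.exp_pos 1).le
            have hrr : (0:ℝ) ≤ (r:ℝ) := by positivity
            exact mul_nonneg (mul_nonneg hexp hrr) (mul_nonneg hl0.le hκτ)
    -- Jensen step
    have hJ : (∑ σ : (Fin l × Fin n) → Bool, M σ) ≤ 2^(l*n) * Real.sqrt (Q * l) := by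
      have hcard : ((Finset.univ : Finset ((Fin l × Fin n) → Bool)).card : ℝ) = 2^(l*n) := by
        rw [Finset.card_univ]
        rw [show Fintype.card ((Fin l × Fin n) → Bool) = 2^(l*n) by
          rw [Fintype.card_fun, Fintype.card_bool, Fintype.card_prod,
            Fintype.card_fin, Fintype.card_fin]]
        push_cast; ring
      have h2q : 2*q = (2*q - 1) + 1 := by omega
      have hJen := pow_sum_div_card_le_sum_pow
        (s := (Finset.univ : Finset ((Fin l × Fin n) → Bool))) (f := M)
        (fun σ _ => hM0 σ) (2*q - 1)
      rw [← h2q, hcard] at hJen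
      have hsq : (Q*l)^q = (Real.sqrt (Q*l))^(2*q) := by
        rw [pow_mul, Real.sq_sqrt hQl0]
      have hA : (∑ σ : (Fin l × Fin n) → Bool, M σ^(2*q)) ≤ 2^(l*n) * (Q*l)^q := by
        calc _ ≤ (m:ℝ) * (2^(l*n) * dfac q * (l * (κ*τ))^q) := hMpow
          _ ≤ 2^(l*n) * (Q * l)^q := hmain
      have hsum_pow : (∑ σ : (Fin l × Fin n) → Bool, M σ)^(2*q)
          ≤ ((2:ℝ)^(l*n) * Real.sqrt (Q*l))^(2*q) := by
        rw [div_le_iff₀ (by positivity)] at hJen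
        calc (∑ σ : (Fin l × Fin n) → Bool, M σ)^(2*q)
            ≤ (∑ σ : (Fin l × Fin n) → Bool, M σ^(2*q)) * ((2:ℝ)^(l*n))^(2*q-1) := hJen
          _ ≤ ((2:ℝ)^(l*n) * (Q*l)^q) * ((2:ℝ)^(l*n))^(2*q-1) := by
              apply mul_le_mul_of_nonneg_right hA (by positivity)
          _ = ((2:ℝ)^(l*n))^(2*q) * (Q*l)^q := by
              have hp : ((2:ℝ)^(l*n))^(2*q) = ((2:ℝ)^(l*n))^(2*q-1) * ((2:ℝ)^(l*n)) := by
                rw [← pow_succ, ← h2q]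
              rw [hp]; ring
          _ = ((2:ℝ)^(l*n) * Real.sqrt (Q*l))^(2*q) := by rw [hsq, mul_pow]
      exact (pow_le_pow_iff_left₀ (Finset.sum_nonneg fun σ _ => hM0 σ)
        (by positivity) (by omega)).mp hsum_pow
    -- assemble
    have hsum_total : (∑ σ : Fin l × Fin n → Bool,
        sSup {s : ℝ | ∃ h : ∀ j, H j, (∑ j, ‖h j‖) ≤ lam ∧
          s = ∑ i, ∑ a, radSign (σ (i, a)) * (∑ j, ⟪Ksec j (x i) a, h j⟫)})
        ≤ lam * (2^(l*n) * Real.sqrt (Q*l)) := by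
      calc _ ≤ ∑ σ : Fin l × Fin n → Bool, lam * M σ :=
            Finset.sum_le_sum (fun σ _ => hsupA σ)
        _ = lam * ∑ σ : Fin l × Fin n → Bool, M σ := by rw [Finset.mul_sum]
        _ ≤ lam * (2^(l*n) * Real.sqrt (Q*l)) := mul_le_mul_of_nonneg_left hJ hlam
    have hfin : (1 / (l : ℝ)) * ((1 / (2 ^ (n * l) : ℝ)) *
        ∑ σ : Fin l × Fin n → Bool,
          sSup {s : ℝ | ∃ h : ∀ j, H j, (∑ j, ‖h j‖) ≤ lam ∧
            s = ∑ i, ∑ a, radSign (σ (i, a)) * (∑ j, ⟪Ksec j (x i) a, h j⟫)})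
        ≤ (1 / (l : ℝ)) * ((1 / (2 ^ (n * l) : ℝ)) * (lam * (2^(l*n) * Real.sqrt (Q*l)))) := by
      apply mul_le_mul_of_nonneg_left _ (by positivity)
      apply mul_le_mul_of_nonneg_left hsum_total (by positivity)
    refine le_trans hfin (le_of_eq ?_)
    have e1 : Q / (l:ℝ) = (Q*l)/(l*l) := by field_simp
    rw [e1, Real.sqrt_div hQl0, Real.sqrt_mul_self hl0.le]
    rw [mul_comm n l]
    field_simp
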